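/- Let G ∈ 𝕆^{n×k} with tr(GᵀD) ≠ 0 be a local maximizer of η on 𝕆^{n×k}. Then for every real n×k matrix J, (tr(DᵀJ) − tr(GᵀD JᵀG))² / η(G) ≤ tr(Jᵀ E(G) J) − tr(Jᵀ G M(G) Gᵀ J) + ξ(G)·tr(Jᵀ G DᵀG Gᵀ J) + tr(Gᵀ J M(G) Jᵀ G) − tr(J M(G) Jᵀ). -/

import Mathlib

open Matrix

/-- The objective `η(G) = tr(GᵀD)² / tr(GᵀAG)`. -/
noncomputable def eta {n k : ℕ} (A : Matrix (Fin n) (Fin n) ℝ)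
    (D G : Matrix (Fin n) (Fin k) ℝ) : ℝ :=
  (Matrix.trace (Gᵀ * D)) ^ 2 / Matrix.trace (Gᵀ * A * G)

/-- `ξ(G) = tr(GᵀAG) / tr(GᵀD)`. -/
noncomputable def xi {n k : ℕ} (A : Matrix (Fin n) (Fin n) ℝ)
    (D G : Matrix (Fin n) (Fin k) ℝ) : ℝ :=
  Matrix.trace (Gᵀ * A * G) / Matrix.trace (Gᵀ * D)

/-- `sym(B) = (B + Bᵀ)/2`. -/
noncomputable def symPart {k : ℕ} (B : Matrix (Fin k) (Fin k) ℝ) : Matrix (Fin k) (Fin k) ℝ :=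
  (1 / 2 : ℝ) • (B + Bᵀ)

/-- `M(G) = sym(GᵀAG − ξ(G)·GᵀD)`. -/
noncomputable def Mmat {n k : ℕ} (A : Matrix (Fin n) (Fin n) ℝ)
    (D G : Matrix (Fin n) (Fin k) ℝ) : Matrix (Fin k) (Fin k) ℝ :=
  symPart (Gᵀ * A * G - xi A D G • (Gᵀ * D))

/-- `E(G) = A − ξ(G)·(DGᵀ + GDᵀ)`. -/
noncomputable def Emat {n k : ℕ} (A : Matrix (Fin n) (Fin n) ℝ)
    (D G : Matrix (Fin n) (Fin k) ℝ) : Matrix (Fin n) (Fin n) ℝ :=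
  A - xi A D G • (D * Gᵀ + G * Dᵀ)

/-- The Frobenius norm of a real matrix. -/
noncomputable def frobNorm {n k : ℕ} (M : Matrix (Fin n) (Fin k) ℝ) : ℝ :=
  Real.sqrt (∑ i, ∑ j, (M i j) ^ 2)

/-- `G` is a local maximizer of `η` on the Stiefel manifold `𝕆^{n×k}`. -/
def IsLocalMaxEta {n k : ℕ} (A : Matrix (Fin n) (Fin n) ℝ)
    (D G : Matrix (Fin n) (Fin k) ℝ) : Prop :=
  Gᵀ * G = 1 ∧ ∃ ε > (0 : ℝ), ∀ G' : Matrix (Fin n) (Fin k) ℝ,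
    G'ᵀ * G' = 1 → frobNorm (G' - G) < ε → eta A D G' ≤ eta A D G


open Matrix NormedSpace

theorem linHasDerivAt {E F : Type*} [NormedAddCommGroup E] [NormedSpace ℝ E]
    [NormedAddCommGroup F] [NormedSpace ℝ F] [FiniteDimensional ℝ E]
    (L : E →ₗ[ℝ] F) {f : ℝ → E} {f' : E} {t : ℝ} (hf : HasDerivAt f f' t) :
    HasDerivAt (fun s => L (f s)) (L f') t := by
  have h := (LinearMap.toContinuousLinearMap L).hasFDerivAt (x := f t)
  have h2 := h.comp_hasDerivAt t hf
  simpa [Function.comp_def] using h2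


theorem trace_conj_pos {n k : ℕ} (hk : 0 < k) {A : Matrix (Fin n) (Fin n) ℝ} (hA : A.PosDef)
    {G' : Matrix (Fin n) (Fin k) ℝ} (hG' : G'ᵀ * G' = 1) :
    0 < Matrix.trace (G'ᵀ * A * G') := by
  haveI : Nonempty (Fin k) := ⟨⟨0, hk⟩⟩
  have hdiag : ∀ j : Fin k, (G'ᵀ * A * G') j j =
      (fun i => G' i j) ⬝ᵥ (A *ᵥ fun i => G' i j) := by
    intro j
    simp only [Matrix.mul_apply, dotProduct, Matrix.mulVec, Matrix.transpose_apply,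
      Finset.mul_sum, Finset.sum_mul]
    rw [Finset.sum_comm]
    apply Finset.sum_congr rfl
    intro i _
    apply Finset.sum_congr rfl
    intro l _
    ring
  have hcol : ∀ j : Fin k, (fun i => G' i j) ≠ 0 := by
    intro j hcol0
    have h1 : (G'ᵀ * G') j j = (1 : ℝ) := by rw [hG']; simp
    have h2 : (G'ᵀ * G') j j = ∑ i, G' i j * G' i j := by
      simp [Matrix.mul_apply]
    have : ∀ i, G' i j = 0 := fun i => congrFun hcol0 i
    simp [this] at h2
    rw [h2] at h1
    norm_num at h1
  rw [Matrix.trace]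
  apply Finset.sum_pos
  · intro j _
    rw [Matrix.diag, hdiag j]
    exact by simpa using hA.dotProduct_mulVec_pos (hcol j)
  · exact Finset.univ_nonempty

/-- If `tr(Wᵀ X) = 0` for all skew `W`, then `X` is symmetric. -/
theorem symm_of_skew_trace {n : ℕ} {X : Matrix (Fin n) (Fin n) ℝ}
    (h : ∀ W : Matrix (Fin n) (Fin n) ℝ, Wᵀ = -W → Matrix.trace (Wᵀ * X) = 0) :
    Xᵀ = X := by
  set W₀ : Matrix (Fin n) (Fin n) ℝ := X - Xᵀ with hW₀
  have hskew : W₀ᵀ = -W₀ := by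
    simp [hW₀, transpose_sub, neg_sub]
  have h1 : Matrix.trace (W₀ᵀ * X) = 0 := h W₀ hskew
  have h2 : Matrix.trace (W₀ᵀ * Xᵀ) = 0 := by
    have : Matrix.trace (W₀ᵀ * Xᵀ) = Matrix.trace (W₀ * X) := trace_transpose_mul W₀ X
    rw [this]
    have : Matrix.trace (W₀ * X) = -Matrix.trace (W₀ᵀ * X) := by
      rw [hskew]; simp
    rw [this, h1, neg_zero]
  have h3 : Matrix.trace (W₀ᵀ * W₀) = 0 := by
    have : W₀ᵀ * W₀ = W₀ᵀ * X - W₀ᵀ * Xᵀ := by rw [hW₀]; noncomm_ring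
    rw [this, trace_sub, h1, h2, sub_zero]
  have h4 : W₀ = 0 := by
    have hsum : Matrix.trace (W₀ᵀ * W₀) = ∑ i : Fin n, ∑ j : Fin n, (W₀ j i)^2 := by
      simp [Matrix.trace, Matrix.diag, Matrix.mul_apply, sq]
    rw [hsum] at h3
    ext i j
    have hz : ∀ i ∈ Finset.univ, ∑ j : Fin n, (W₀ j i : ℝ)^2 = 0 := by
      intro i _
      have := (Finset.sum_eq_zero_iff_of_nonneg (fun i _ => Finset.sum_nonneg
        (fun j _ => sq_nonneg (W₀ j i)))).mp h3
      exact this i (Finset.mem_univ i)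
    have := (Finset.sum_eq_zero_iff_of_nonneg (fun l _ => sq_nonneg (W₀ l j))).mp
      (hz j (Finset.mem_univ j)) i (Finset.mem_univ i)
    simpa using pow_eq_zero_iff (n := 2) (by norm_num) |>.mp this
  have : X - Xᵀ = 0 := h4
  have := sub_eq_zero.mp this
  exact this.symm

open Filter Topology in
/-- Second derivative test at a local max. -/
theorem secondDerivTest {f f' : ℝ → ℝ} {c : ℝ}
    (hf : ∀ t, HasDerivAt f (f' t) t) (hf' : HasDerivAt f' c 0)
    (hmax : IsLocalMax f 0) : f' 0 = 0 ∧ c ≤ 0 := by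
  have h0 : f' 0 = 0 := by
    have := hmax.deriv_eq_zero
    rwa [(hf 0).deriv] at this
  refine ⟨h0, ?_⟩
  by_contra hc
  push_neg at hc
  -- slope of f' tends to c > 0
  have hslope : Tendsto (fun z => f' z / z) (𝓝[≠] 0) (𝓝 c) := by
    have := hasDerivAt_iff_tendsto_slope.mp hf'
    refine this.congr' ?_
    filter_upwards [self_mem_nhdsWithin] with z hz
    simp [slope, h0, div_eq_inv_mul]
  have hpos : ∀ᶠ z in 𝓝[≠] (0:ℝ), 0 < f' z / z :=
    hslope.eventually (eventually_gt_nhds hc)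
  rw [eventually_nhdsWithin_iff] at hpos
  rcases Metric.eventually_nhds_iff.mp hpos with ⟨δ, hδ, hδ'⟩
  rcases Metric.eventually_nhds_iff.mp hmax with ⟨δ₂, hδ₂, hδ₂'⟩
  set t := min δ δ₂ / 2 with ht
  have htpos : 0 < t := by positivity
  have htδ : t < δ := by
    have h1 := min_le_left δ δ₂
    simp only [ht]
    linarith
  have htδ₂ : t < δ₂ := by
    have h1 := min_le_right δ δ₂
    simp only [ht]
    linarith
  -- MVT on [0, t]
  obtain ⟨ζ, hζmem, hζ⟩ := exists_hasDerivAt_eq_slope f f' htpos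
    (fun x _ => (hf x).continuousAt.continuousWithinAt) (fun x _ => hf x)
  have hfle : f t ≤ f 0 := by
    apply hδ₂'
    simp [abs_of_pos htpos]
    exact htδ₂
  have hslope_le : f' ζ ≤ 0 := by
    rw [hζ]
    apply div_nonpos_of_nonpos_of_nonneg <;> [linarith; linarith]
  have hζpos : 0 < ζ := hζmem.1
  have hζδ : |ζ - 0| < δ := by
    rw [sub_zero, abs_of_pos hζpos]
    exact lt_trans hζmem.2 htδ
  have := hδ' hζδ (ne_of_gt hζpos)
  have : 0 < f' ζ := by
    have h2 := this
    by_contra hle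
    push_neg at hle
    have : f' ζ / ζ ≤ 0 := div_nonpos_of_nonpos_of_nonneg hle (le_of_lt hζpos)
    linarith
  linarith


/-- First- and second-order conditions along `exp(tW)G` for skew `W`. -/
theorem core_conditions {n k : ℕ} (hk : 0 < k)
    {A : Matrix (Fin n) (Fin n) ℝ} (hA : A.PosDef)
    {D G : Matrix (Fin n) (Fin k) ℝ}
    (htr : Matrix.trace (Gᵀ * D) ≠ 0)
    (hloc : IsLocalMaxEta A D G)
    (W : Matrix (Fin n) (Fin n) ℝ) (hW : Wᵀ = -W) :
    (Matrix.trace (Gᵀ*A*G) * Matrix.trace (Wᵀ * (D * Gᵀ))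
        = Matrix.trace (Gᵀ*D) * Matrix.trace (Wᵀ * (A * (G*Gᵀ)))) ∧
    (Matrix.trace (Gᵀ*A*G) * (Matrix.trace (Wᵀ * (D * Gᵀ)))^2
        + Matrix.trace (Gᵀ*A*G) * Matrix.trace (Gᵀ*D) * Matrix.trace ((W*W)ᵀ * (D * Gᵀ))
      ≤ Matrix.trace (Gᵀ*D)^2 *
          (Matrix.trace ((W*W)ᵀ * (A * (G*Gᵀ))) + Matrix.trace (Wᵀ * (A * (W * (G*Gᵀ)))))) := by
  obtain ⟨hGG, ε, hε, hmax⟩ := hloc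
  have hAT : Aᵀ = A := by
    have := hA.1
    simpa [Matrix.IsHermitian, Matrix.conjTranspose_eq_transpose_of_trivial] using this
  set α : ℝ := Matrix.trace (Gᵀ*D) with hα
  set Q : ℝ := Matrix.trace (Gᵀ*A*G) with hQdef
  have hQpos : 0 < Q := trace_conj_pos hk hA hGG
  letI : SeminormedRing (Matrix (Fin n) (Fin n) ℝ) := Matrix.linftyOpSemiNormedRing
  letI : NormedRing (Matrix (Fin n) (Fin n) ℝ) := Matrix.linftyOpNormedRing
  letI : NormedAlgebra ℝ (Matrix (Fin n) (Fin n) ℝ) := Matrix.linftyOpNormedAlgebra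
  set U : ℝ → Matrix (Fin n) (Fin n) ℝ := fun t => exp (t • W) with hUdef
  have hU : ∀ t, HasDerivAt U (U t * W) t := fun t => hasDerivAt_exp_smul_const W t
  have hU0 : U 0 = 1 := by simp [hUdef, exp_zero]
  have hUorth : ∀ t, (U t)ᵀ * U t = 1 := by
    intro t
    have h1 : (U t)ᵀ = exp (-(t • W)) := by
      rw [hUdef]
      rw [← Matrix.exp_transpose]
      congr 1
      rw [transpose_smul, hW, smul_neg]
    rw [h1, ← Matrix.exp_add_of_commute _ _ ((Commute.refl (t • W)).neg_left)]
    simp [exp_zero]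
  set Cm : Matrix (Fin n) (Fin n) ℝ := D * Gᵀ with hCm
  set Fm : Matrix (Fin n) (Fin n) ℝ := G * Gᵀ with hFm
  -- scalar functions
  set g : ℝ → ℝ := fun t => Matrix.trace ((U t)ᵀ * Cm) with hgdef
  set g1 : ℝ → ℝ := fun t => Matrix.trace ((U t * W)ᵀ * Cm) with hg1def
  set q : ℝ → ℝ := fun t => Matrix.trace ((U t)ᵀ * (A * (U t * Fm))) with hqdef
  set q1 : ℝ → ℝ := fun t => Matrix.trace ((U t * W)ᵀ * (A * (U t * Fm)))
      + Matrix.trace ((U t)ᵀ * (A * ((U t * W) * Fm))) with hq1def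
  -- derivative of g
  have hg : ∀ t, HasDerivAt g (g1 t) t := by
    intro t
    exact linHasDerivAt
      { toFun := fun X => Matrix.trace (Xᵀ * Cm)
        map_add' := by intros; simp only [transpose_add, add_mul, trace_add]
        map_smul' := by intros; simp [transpose_smul, Matrix.smul_mul, trace_smul] }
      (hU t)
  have hg1 : ∀ t, HasDerivAt g1 (Matrix.trace ((U t * W * W)ᵀ * Cm)) t := by
    intro t
    exact linHasDerivAt
      { toFun := fun X => Matrix.trace ((X * W)ᵀ * Cm)
        map_add' := by intros; simp only [add_mul, transpose_add, trace_add]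
        map_smul' := by intros; simp [Matrix.smul_mul, transpose_smul, trace_smul] }
      (hU t)
  -- matrix-valued building blocks
  have hVtrans : ∀ t, HasDerivAt (fun s => (U s)ᵀ) ((U t * W)ᵀ) t := by
    intro t
    exact linHasDerivAt
      { toFun := fun X => Xᵀ
        map_add' := by intros; simp only [transpose_add]
        map_smul' := by intros; simp [transpose_smul] }
      (hU t)
  have hV1 : ∀ t, HasDerivAt (fun s => (U s * W)ᵀ) ((U t * W * W)ᵀ) t := by
    intro t
    exact linHasDerivAt
      { toFun := fun X => (X * W)ᵀ
        map_add' := by intros; simp only [add_mul, transpose_add]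
        map_smul' := by intros; simp [Matrix.smul_mul, transpose_smul] }
      (hU t)
  have hY : ∀ t, HasDerivAt (fun s => A * (U s * Fm)) (A * ((U t * W) * Fm)) t := by
    intro t
    exact linHasDerivAt
      { toFun := fun X => A * (X * Fm)
        map_add' := by intros; simp only [add_mul, mul_add]
        map_smul' := by intros; simp [Matrix.smul_mul, Matrix.mul_smul] }
      (hU t)
  have hY2 : ∀ t, HasDerivAt (fun s => A * ((U s * W) * Fm)) (A * ((U t * W * W) * Fm)) t := by
    intro t
    exact linHasDerivAt
      { toFun := fun X => A * ((X * W) * Fm)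
        map_add' := by intros; simp only [add_mul, mul_add]
        map_smul' := by intros; simp [Matrix.smul_mul, Matrix.mul_smul] }
      (hU t)
  have htraceLin : ∀ {f : ℝ → Matrix (Fin n) (Fin n) ℝ} {f' : Matrix (Fin n) (Fin n) ℝ} {t : ℝ},
      HasDerivAt f f' t → HasDerivAt (fun s => Matrix.trace (f s)) (Matrix.trace f') t := by
    intro f f' t hf
    exact linHasDerivAt (Matrix.traceLinearMap (Fin n) ℝ ℝ) hf
  have hq : ∀ t, HasDerivAt q (q1 t) t := by
    intro t
    have := htraceLin ((hVtrans t).mul (hY t))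
    rw [Matrix.trace_add] at this
    exact this
  have hq1 : HasDerivAt q1
      (Matrix.trace ((U 0 * W * W)ᵀ * (A * (U 0 * Fm)))
        + Matrix.trace ((U 0 * W)ᵀ * (A * ((U 0 * W) * Fm)))
        + (Matrix.trace ((U 0 * W)ᵀ * (A * ((U 0 * W) * Fm)))
        + Matrix.trace ((U 0)ᵀ * (A * ((U 0 * W * W) * Fm))))) 0 := by
    have d1 := htraceLin ((hV1 0).mul (hY 0))
    have d2 := htraceLin ((hVtrans 0).mul (hY2 0))
    have := d1.add d2
    rw [Matrix.trace_add, Matrix.trace_add] at this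
    exact this
    -- the objective along the curve
  set h : ℝ → ℝ := fun t => Q * (g t)^2 - α^2 * q t with hhdef
  set h1 : ℝ → ℝ := fun t => Q * (2 * (g t * g1 t)) - α^2 * q1 t with hh1def
  have hh : ∀ t, HasDerivAt h (h1 t) t := by
    intro t
    have := (((hg t).pow 2).const_mul Q).sub ((hq t).const_mul (α^2))
    exact this.congr_deriv (by simp only [hh1def]; push_cast; ring)
  have hc0 : HasDerivAt h1
      (Q * (2 * (g1 0 * g1 0 + g 0 * Matrix.trace ((U 0 * W * W)ᵀ * Cm)))
        - α^2 * (Matrix.trace ((U 0 * W * W)ᵀ * (A * (U 0 * Fm)))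
        + Matrix.trace ((U 0 * W)ᵀ * (A * ((U 0 * W) * Fm)))
        + (Matrix.trace ((U 0 * W)ᵀ * (A * ((U 0 * W) * Fm)))
        + Matrix.trace ((U 0)ᵀ * (A * ((U 0 * W * W) * Fm)))))) 0 := by
    have hprod := (hg 0).mul (hg1 0)
    exact ((hprod.const_mul (2:ℝ)).const_mul Q).sub (hq1.const_mul (α^2))
  -- values at 0
  have hg0 : g 0 = α := by
    rw [hgdef]
    simp only [hU0, transpose_one, Matrix.one_mul]
    rw [hCm, hα]
    exact Matrix.trace_mul_comm D Gᵀ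
  have hq0 : q 0 = Q := by
    rw [hqdef]
    simp only [hU0, transpose_one, Matrix.one_mul]
    rw [hFm, hQdef, ← Matrix.mul_assoc, Matrix.trace_mul_comm (A * G) Gᵀ, ← Matrix.mul_assoc]
  -- orthonormality of the curve
  have hG'orth : ∀ t, (U t * G)ᵀ * (U t * G) = 1 := by
    intro t
    rw [transpose_mul, Matrix.mul_assoc, ← Matrix.mul_assoc ((U t)ᵀ), hUorth, Matrix.one_mul, hGG]
  have hqt : ∀ t, q t = Matrix.trace ((U t * G)ᵀ * A * (U t * G)) := by
    intro t
    rw [hqdef]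
    simp only [transpose_mul, Matrix.mul_assoc]
    rw [Matrix.trace_mul_comm Gᵀ ((U t)ᵀ * (A * (U t * G)))]
    simp only [Matrix.mul_assoc, hFm]
  have hgt : ∀ t, Matrix.trace ((U t * G)ᵀ * D) = g t := by
    intro t
    rw [hgdef]
    simp only [transpose_mul, Matrix.mul_assoc]
    rw [Matrix.trace_mul_comm Gᵀ ((U t)ᵀ * D), hCm]
    simp only [Matrix.mul_assoc]
  have hqpos : ∀ t, 0 < q t := by
    intro t
    rw [hqt t]
    exact trace_conj_pos hk hA (hG'orth t)
  -- entries are continuous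
  have hentry : ∀ (i : Fin n) (j : Fin k), Continuous fun t => (U t * G) i j := by
    intro i j
    have hd : ∀ t, HasDerivAt (fun s => (U s * G) i j) ((U t * W * G) i j) t := by
      intro t
      exact linHasDerivAt
        { toFun := fun X => (X * G) i j
          map_add' := by intros; simp [Matrix.add_mul]
          map_smul' := by intros; simp [Matrix.smul_mul] }
        (hU t)
    exact continuous_iff_continuousAt.2 fun t => (hd t).continuousAt
  have hev : ∀ᶠ t in nhds (0:ℝ), frobNorm (U t * G - G) < ε := by
    have hrw : (fun t => frobNorm (U t * G - G))
        = fun t => Real.sqrt (∑ i, ∑ j, ((U t * G) i j - G i j)^2) := by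
      funext t
      rw [frobNorm]
      congr 1
    have hcont : Continuous fun t => frobNorm (U t * G - G) := by
      rw [hrw]
      exact Real.continuous_sqrt.comp (continuous_finset_sum _ fun i _ =>
        continuous_finset_sum _ fun j _ => ((hentry i j).sub continuous_const).pow 2)
    have h0v : frobNorm (U 0 * G - G) = 0 := by
      simp [frobNorm, hU0]
    have hca := hcont.continuousAt (x := 0)
    rw [ContinuousAt, h0v] at hca
    exact hca.eventually (eventually_lt_nhds hε)
  -- local max of h at 0
  have hh0 : h 0 = 0 := by
    rw [hhdef]
    simp only [hg0, hq0]
    ring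
  have hmaxh : IsLocalMax h 0 := by
    filter_upwards [hev] with t hνt
    have hle := hmax (U t * G) (hG'orth t) hνt
    rw [eta, eta, hgt t, ← hqt t, ← hα, ← hQdef] at hle
    have hQle : (g t)^2 * Q ≤ α^2 * q t := (div_le_div_iff₀ (hqpos t) hQpos).mp hle
    rw [hh0, hhdef]
    simp only
    nlinarith [hQle]
  obtain ⟨hfoc0, hsoc0⟩ := secondDerivTest hh hc0 hmaxh
    -- generic transpose-trace identity
  have hAF : ∀ V : Matrix (Fin n) (Fin n) ℝ,
      Matrix.trace (A * (V * Fm)) = Matrix.trace (Vᵀ * (A * Fm)) := by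
    intro V
    have hFmT : Fmᵀ = Fm := by rw [hFm, transpose_mul, transpose_transpose]
    calc Matrix.trace (A * (V * Fm)) = Matrix.trace ((A * (V * Fm))ᵀ) := (trace_transpose _).symm
      _ = Matrix.trace ((V * Fm)ᵀ * Aᵀ) := by rw [transpose_mul]
      _ = Matrix.trace ((Fmᵀ * Vᵀ) * A) := by rw [transpose_mul, hAT]
      _ = Matrix.trace (Fm * (Vᵀ * A)) := by rw [hFmT, Matrix.mul_assoc]
      _ = Matrix.trace ((Vᵀ * A) * Fm) := Matrix.trace_mul_comm _ _
      _ = Matrix.trace (Vᵀ * (A * Fm)) := by rw [Matrix.mul_assoc]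
  have e1 : g1 0 = Matrix.trace (Wᵀ * Cm) := by
    rw [hg1def]; simp only [hU0, Matrix.one_mul]
  constructor
  · -- first-order condition
    have h10 : h1 0 = 2*α*(Q * Matrix.trace (Wᵀ * Cm) - α * Matrix.trace (Wᵀ * (A * Fm))) := by
      rw [hh1def]
      simp only [hg0]
      have e2 : q1 0 = Matrix.trace (Wᵀ * (A * Fm)) + Matrix.trace (A * (W * Fm)) := by
        rw [hq1def]; simp only [hU0, Matrix.one_mul, transpose_one]
      rw [e1, e2, hAF W]
      ring
    rw [h10] at hfoc0
    rcases mul_eq_zero.mp hfoc0 with h' | h'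
    · exact absurd (by linarith : α = 0) htr
    · linarith
  · -- second-order condition
    have e3 : Matrix.trace ((U 0 * W * W)ᵀ * Cm) = Matrix.trace ((W*W)ᵀ * Cm) := by
      simp only [hU0, Matrix.one_mul]
    have e4 : Matrix.trace ((U 0 * W * W)ᵀ * (A * (U 0 * Fm)))
        = Matrix.trace ((W*W)ᵀ * (A * Fm)) := by
      simp only [hU0, Matrix.one_mul]
    have e5 : Matrix.trace ((U 0 * W)ᵀ * (A * ((U 0 * W) * Fm)))
        = Matrix.trace (Wᵀ * (A * (W * Fm))) := by
      simp only [hU0, Matrix.one_mul]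
    have e6 : Matrix.trace ((U 0)ᵀ * (A * ((U 0 * W * W) * Fm)))
        = Matrix.trace ((W*W)ᵀ * (A * Fm)) := by
      simp only [hU0, Matrix.one_mul, transpose_one]
      exact hAF (W*W)
    rw [e1, e3, e4, e5, e6, hg0] at hsoc0
    rw [pow_two]
    linarith


theorem foc_conditions {n k : ℕ} (hk : 0 < k)
    {A : Matrix (Fin n) (Fin n) ℝ} (hA : A.PosDef)
    {D G : Matrix (Fin n) (Fin k) ℝ}
    (htr : Matrix.trace (Gᵀ * D) ≠ 0)
    (hloc : IsLocalMaxEta A D G) :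
    (Gᵀ * D)ᵀ = Gᵀ * D ∧
      A * G = xi A D G • D + G * (Gᵀ * A * G - xi A D G • (Gᵀ * D)) := by
  have hGG := hloc.1
  have hAT : Aᵀ = A := by
    have := hA.1
    simpa [Matrix.IsHermitian, Matrix.conjTranspose_eq_transpose_of_trivial] using this
  set α : ℝ := Matrix.trace (Gᵀ*D) with hα
  set Q : ℝ := Matrix.trace (Gᵀ*A*G) with hQdef
  have hQpos : 0 < Q := trace_conj_pos hk hA hGG
  have hxi : xi A D G = Q / α := by rw [xi]
  -- the first-order matrix `X` is symmetric
  set X : Matrix (Fin n) (Fin n) ℝ := Q • (D * Gᵀ) - α • (A * (G * Gᵀ)) with hX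
  have hXsymm : Xᵀ = X := by
    apply symm_of_skew_trace
    intro W hW
    have h1 := (core_conditions hk hA htr hloc W hW).1
    rw [hX]
    rw [Matrix.mul_sub, Matrix.mul_smul, Matrix.mul_smul, trace_sub, trace_smul, trace_smul]
    rw [← hα, ← hQdef] at h1
    simp only [smul_eq_mul]
    linarith
  -- transpose computation
  have hXT : Xᵀ = Q • (G * Dᵀ) - α • (G * (Gᵀ * A)) := by
    rw [hX]
    simp [transpose_sub, transpose_smul, transpose_mul, Matrix.mul_assoc, hAT]
  have hXX : Q • (G * Dᵀ) - α • (G * (Gᵀ * A)) = Q • (D * Gᵀ) - α • (A * (G * Gᵀ)) :=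
    (hXT.symm.trans hXsymm).trans hX
  -- multiply by G on the right
  have hEq2 : Q • (G * (Dᵀ * G)) - α • (G * (Gᵀ * (A * G))) = Q • D - α • (A * G) := by
    have h := congrArg (fun M => M * G) hXX
    simp only [Matrix.sub_mul, Matrix.smul_mul, Matrix.mul_assoc] at h
    rw [hGG, Matrix.mul_one, Matrix.mul_one] at h
    exact h
  -- left-multiply by Gᵀ to get symmetry of GᵀD
  have hDG : Dᵀ * G = Gᵀ * D := by
    have h := congrArg (fun M => Gᵀ * M) hEq2
    simp only [Matrix.mul_sub, Matrix.mul_smul] at h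
    rw [← Matrix.mul_assoc Gᵀ G (Dᵀ * G), hGG, Matrix.one_mul,
      ← Matrix.mul_assoc Gᵀ G (Gᵀ * (A * G)), hGG, Matrix.one_mul] at h
    have h2 : Q • (Dᵀ * G) = Q • (Gᵀ * D) := by
      have h3 := congrArg (fun M => M + α • (Gᵀ * (A * G))) h
      simpa [sub_add_cancel] using h3
    exact smul_right_injective (Matrix (Fin k) (Fin k) ℝ) (ne_of_gt hQpos) h2
  refine ⟨by rw [transpose_mul, transpose_transpose, hDG], ?_⟩
  -- final FOC identity
  have hαξ : α * (Q / α) = Q := by field_simp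
  have key : α • (xi A D G • D + G * (Gᵀ * A * G - xi A D G • (Gᵀ * D)))
      = Q • D + (α • (G * (Gᵀ * (A * G))) - Q • (G * (Dᵀ * G))) := by
    rw [hxi, smul_add, smul_smul, hαξ, Matrix.mul_sub, Matrix.mul_smul, smul_sub, smul_smul, hαξ,
      ← hDG, Matrix.mul_assoc Gᵀ A G]
  have h4 : Q • (G * (Dᵀ * G)) + α • (A * G) = Q • D + α • (G * (Gᵀ * (A * G))) :=
    sub_eq_sub_iff_add_eq_add.mp hEq2
  have h5 : α • (A * G) = Q • D + (α • (G * (Gᵀ * (A * G))) - Q • (G * (Dᵀ * G))) := by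
    have h6 : α • (A * G) = (Q • D + α • (G * (Gᵀ * (A * G)))) - Q • (G * (Dᵀ * G)) := by
      apply eq_sub_of_add_eq
      rw [add_comm]
      exact h4
    rw [h6, add_sub_assoc]
  exact smul_right_injective (Matrix (Fin n) (Fin k) ℝ) htr (h5.trans key.symm)



/-- at a local maximizer `G` of `η` on `𝕆^{n×k}`, for every `J ∈ ℝ^{n×k}`:
`(tr(DᵀJ) − tr(GᵀD JᵀG))²/η(G) ≤ tr(JᵀE(G)J) − tr(JᵀG M(G) GᵀJ) + ξ(G)·tr(JᵀG DᵀG GᵀJ)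
 + tr(GᵀJ M(G) JᵀG) − tr(J M(G) Jᵀ)`. -/
theorem quadratic_inequality_of_localMax
    (n k : ℕ) (hk1 : 1 ≤ k) (hkn : k < n)
    (A : Matrix (Fin n) (Fin n) ℝ) (hA : A.PosDef)
    (D : Matrix (Fin n) (Fin k) ℝ)
    (G : Matrix (Fin n) (Fin k) ℝ)
    (htr : Matrix.trace (Gᵀ * D) ≠ 0)
    (hloc : IsLocalMaxEta A D G) :
    ∀ J : Matrix (Fin n) (Fin k) ℝ,
      (Matrix.trace (Dᵀ * J) - Matrix.trace (Gᵀ * D * Jᵀ * G)) ^ 2 / eta A D G ≤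
        Matrix.trace (Jᵀ * Emat A D G * J)
          - Matrix.trace (Jᵀ * G * Mmat A D G * Gᵀ * J)
          + xi A D G * Matrix.trace (Jᵀ * G * (Dᵀ * G) * Gᵀ * J)
          + Matrix.trace (Gᵀ * J * Mmat A D G * Jᵀ * G)
          - Matrix.trace (J * Mmat A D G * Jᵀ) := by
  intro J
  have hk : 0 < k := hk1
  have hGG := hloc.1
  have hAT : Aᵀ = A := by
    have := hA.1
    simpa [Matrix.IsHermitian, Matrix.conjTranspose_eq_transpose_of_trivial] using this
  obtain ⟨hDsym, hfoc⟩ := foc_conditions hk hA htr hloc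
  set α : ℝ := Matrix.trace (Gᵀ*D) with hα
  set Q : ℝ := Matrix.trace (Gᵀ*A*G) with hQdef
  have hQpos : 0 < Q := trace_conj_pos hk hA hGG
  have hxi : xi A D G = Q / α := by rw [xi]
  have heta : eta A D G = α^2 / Q := by rw [eta]
  set M₀ : Matrix (Fin k) (Fin k) ℝ := Gᵀ * A * G - xi A D G • (Gᵀ * D) with hM0
  have hDG2 : Dᵀ * G = Gᵀ * D := by
    rw [← hDsym, transpose_mul, transpose_transpose]
  have hM0symm : M₀ᵀ = M₀ := by
    rw [hM0]
    simp only [transpose_sub, transpose_smul, transpose_mul, transpose_transpose, hAT, hDG2,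
      Matrix.mul_assoc]
  have hMmat : Mmat A D G = M₀ := by
    rw [Mmat, symPart, ← hM0, hM0symm, ← two_smul ℝ, smul_smul]
    norm_num
  set K : Matrix (Fin n) (Fin k) ℝ := J - G * (Gᵀ * J) with hK
  have hGK : Gᵀ * K = 0 := by
    rw [hK, Matrix.mul_sub, ← Matrix.mul_assoc, hGG, Matrix.one_mul, sub_self]
  have hKG : Kᵀ * G = 0 := by
    have := congrArg Matrix.transpose hGK
    simpa [transpose_mul] using this
  set W : Matrix (Fin n) (Fin n) ℝ := K * Gᵀ - G * Kᵀ with hWdef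
  have hW : Wᵀ = -W := by
    rw [hWdef]
    simp [transpose_sub, transpose_mul, neg_sub]
  have hsoc := (core_conditions hk hA htr hloc W hW).2
  rw [← hα, ← hQdef] at hsoc
  -- simplify the curve direction
  have hWG : W * G = K := by
    rw [hWdef, Matrix.sub_mul, Matrix.mul_assoc K Gᵀ G, hGG, Matrix.mul_one,
      Matrix.mul_assoc G Kᵀ G, hKG, Matrix.mul_zero, sub_zero]
  have hWWG : (W * W) * G = -(G * (Kᵀ * K)) := by
    rw [Matrix.mul_assoc, hWG, hWdef, Matrix.sub_mul, Matrix.mul_assoc K Gᵀ K, hGK,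
      Matrix.mul_zero, zero_sub, Matrix.mul_assoc]
  -- trace conversions
  have hT1 : ∀ (V : Matrix (Fin n) (Fin n) ℝ) (B : Matrix (Fin n) (Fin k) ℝ),
      Matrix.trace (Vᵀ * (B * Gᵀ)) = Matrix.trace ((V * G)ᵀ * B) := by
    intro V B
    calc Matrix.trace (Vᵀ * (B * Gᵀ)) = Matrix.trace ((Vᵀ * B) * Gᵀ) := by
          rw [Matrix.mul_assoc]
      _ = Matrix.trace (Gᵀ * (Vᵀ * B)) := Matrix.trace_mul_comm _ _
      _ = Matrix.trace ((Gᵀ * Vᵀ) * B) := by rw [Matrix.mul_assoc]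
      _ = Matrix.trace ((V * G)ᵀ * B) := by rw [transpose_mul]
  have hT3 : ∀ V : Matrix (Fin n) (Fin n) ℝ,
      Matrix.trace (Vᵀ * (A * (G * Gᵀ))) = Matrix.trace ((V * G)ᵀ * (A * G)) := by
    intro V
    calc Matrix.trace (Vᵀ * (A * (G * Gᵀ))) = Matrix.trace ((Vᵀ * (A * G)) * Gᵀ) := by
          simp only [Matrix.mul_assoc]
      _ = Matrix.trace (Gᵀ * (Vᵀ * (A * G))) := Matrix.trace_mul_comm _ _
      _ = Matrix.trace ((V * G)ᵀ * (A * G)) := by rw [transpose_mul, Matrix.mul_assoc]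
  have e1 : Matrix.trace (Wᵀ * (D * Gᵀ)) = Matrix.trace (Kᵀ * D) := by
    rw [hT1 W D, hWG]
  have e2 : Matrix.trace ((W*W)ᵀ * (D * Gᵀ)) = -Matrix.trace ((Kᵀ * K) * (Gᵀ * D)) := by
    rw [hT1 (W*W) D, hWWG]
    simp only [transpose_neg, transpose_mul, transpose_transpose, Matrix.neg_mul, trace_neg,
      neg_inj, Matrix.mul_assoc]
  have e3 : Matrix.trace ((W*W)ᵀ * (A * (G * Gᵀ))) = -Matrix.trace ((Kᵀ * K) * (Gᵀ*A*G)) := by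
    rw [hT3 (W*W), hWWG]
    simp only [transpose_neg, transpose_mul, transpose_transpose, Matrix.neg_mul, trace_neg,
      neg_inj, Matrix.mul_assoc]
  have e4 : Matrix.trace (Wᵀ * (A * (W * (G * Gᵀ)))) = Matrix.trace (Kᵀ * (A * K)) := by
    have hWGG : W * (G * Gᵀ) = K * Gᵀ := by rw [← Matrix.mul_assoc, hWG]
    rw [hWGG, ← Matrix.mul_assoc A K, hT1 W (A * K), hWG]
  rw [e1, e2, e3, e4] at hsoc
    -- (I) the numerator identity
  have hnum : Matrix.trace (Dᵀ * J) - Matrix.trace (Gᵀ * D * Jᵀ * G) = Matrix.trace (Kᵀ * D) := by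
    have h1 : Matrix.trace (Dᵀ * J) = Matrix.trace (Jᵀ * D) := by
      rw [← Matrix.trace_transpose (Dᵀ * J), transpose_mul, transpose_transpose]
    have h2 : Matrix.trace (Gᵀ * D * Jᵀ * G) = Matrix.trace (Jᵀ * (G * (Gᵀ * D))) := by
      rw [Matrix.trace_mul_cycle (Gᵀ * D) Jᵀ G, Matrix.trace_mul_comm]
    rw [h1, h2, hK]
    simp only [transpose_sub, transpose_mul, transpose_transpose, Matrix.sub_mul, trace_sub,
      Matrix.mul_assoc]
  -- (II) matrix-level consequences of the first-order condition
  have hGG' : ∀ X : Matrix (Fin k) (Fin k) ℝ, Gᵀ * (G * X) = X := by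
    intro X
    rw [← Matrix.mul_assoc, hGG, Matrix.one_mul]
  have hxiDG : xi A D G • (D * Gᵀ) = A * (G * Gᵀ) - G * (M₀ * Gᵀ) := by
    have h := congrArg (fun M => M * Gᵀ) hfoc
    simp only [Matrix.add_mul, Matrix.smul_mul, Matrix.mul_assoc] at h
    rw [h]
    abel
  have hxiGD : xi A D G • (G * Dᵀ) = G * (Gᵀ * A) - G * (M₀ * Gᵀ) := by
    have h := congrArg Matrix.transpose hxiDG
    simp only [transpose_smul, transpose_sub, transpose_mul, transpose_transpose, hAT, hM0symm,
      Matrix.mul_assoc] at h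
    exact h
  have hEtr : Matrix.trace (Jᵀ * Emat A D G * J) =
      Matrix.trace (Jᵀ * (A * J)) - Matrix.trace (Jᵀ * (A * (G * (Gᵀ * J))))
        - Matrix.trace (Jᵀ * (G * (Gᵀ * (A * J))))
        + 2 * Matrix.trace (Jᵀ * (G * (M₀ * (Gᵀ * J)))) := by
    rw [Emat, smul_add, hxiDG, hxiGD]
    simp only [Matrix.mul_sub, Matrix.mul_add, Matrix.sub_mul, Matrix.add_mul, trace_sub,
      trace_add, Matrix.mul_assoc]
    ring
  have hxiDtG : xi A D G • (Dᵀ * G) = Gᵀ * (A * G) - M₀ := by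
    have h := congrArg (fun M => Gᵀ * M) hfoc
    simp only [Matrix.mul_add, Matrix.mul_smul] at h
    rw [hGG' M₀] at h
    rw [hDG2, h]
    abel
  have hterm3 : xi A D G * Matrix.trace (Jᵀ * G * (Dᵀ * G) * Gᵀ * J)
      = Matrix.trace (Jᵀ * (G * (Gᵀ * (A * (G * (Gᵀ * J))))))
        - Matrix.trace (Jᵀ * (G * (M₀ * (Gᵀ * J)))) := by
    have hmid : Jᵀ * G * (xi A D G • (Dᵀ * G)) * Gᵀ * J
        = xi A D G • (Jᵀ * G * (Dᵀ * G) * Gᵀ * J) := by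
      simp only [Matrix.mul_smul, Matrix.smul_mul]
    have h1 : xi A D G * Matrix.trace (Jᵀ * G * (Dᵀ * G) * Gᵀ * J)
        = Matrix.trace (Jᵀ * G * (xi A D G • (Dᵀ * G)) * Gᵀ * J) := by
      rw [hmid, trace_smul, smul_eq_mul]
    rw [h1, hxiDtG]
    simp only [Matrix.mul_sub, Matrix.sub_mul, trace_sub, Matrix.mul_assoc]
  have hKAK : Matrix.trace (Kᵀ * (A * K)) =
      Matrix.trace (Jᵀ * (A * J)) - Matrix.trace (Jᵀ * (A * (G * (Gᵀ * J))))
        - Matrix.trace (Jᵀ * (G * (Gᵀ * (A * J))))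
        + Matrix.trace (Jᵀ * (G * (Gᵀ * (A * (G * (Gᵀ * J)))))) := by
    rw [hK]
    simp only [transpose_sub, transpose_mul, transpose_transpose, Matrix.sub_mul, Matrix.mul_sub,
      trace_sub, Matrix.mul_assoc]
    ring
  have hKK : Kᵀ * K = Jᵀ * J - Jᵀ * (G * (Gᵀ * J)) := by
    rw [hK]
    simp only [transpose_sub, transpose_mul, transpose_transpose, Matrix.sub_mul, Matrix.mul_sub,
      Matrix.mul_assoc]
    rw [hGG' (Gᵀ * J)]
    abel
  have hKKM : Matrix.trace ((Kᵀ * K) * M₀)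
      = Matrix.trace ((Jᵀ * J) * M₀) - Matrix.trace ((Jᵀ * (G * (Gᵀ * J))) * M₀) := by
    rw [hKK, Matrix.sub_mul, trace_sub]
  have hm2 : Matrix.trace (Gᵀ * J * M₀ * Jᵀ * G) = Matrix.trace ((Jᵀ * (G * (Gᵀ * J))) * M₀) := by
    rw [Matrix.trace_mul_cycle (Gᵀ * J * M₀) Jᵀ G]
    rw [Matrix.trace_mul_cycle G (Gᵀ * J * M₀) Jᵀ]
    simp only [Matrix.mul_assoc]
  have hm3 : Matrix.trace (J * M₀ * Jᵀ) = Matrix.trace ((Jᵀ * J) * M₀) := by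
    rw [Matrix.trace_mul_comm (J * M₀) Jᵀ]
    simp only [Matrix.mul_assoc]
  have hm1 : Matrix.trace (Jᵀ * G * M₀ * Gᵀ * J) = Matrix.trace (Jᵀ * (G * (M₀ * (Gᵀ * J)))) := by
    simp only [Matrix.mul_assoc]
  -- assemble the right-hand side
  rw [hMmat, hnum, heta]
  have hRHS : Matrix.trace (Jᵀ * Emat A D G * J)
          - Matrix.trace (Jᵀ * G * M₀ * Gᵀ * J)
          + xi A D G * Matrix.trace (Jᵀ * G * (Dᵀ * G) * Gᵀ * J)
          + Matrix.trace (Gᵀ * J * M₀ * Jᵀ * G)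
          - Matrix.trace (J * M₀ * Jᵀ)
      = Matrix.trace (Kᵀ * (A * K)) - Matrix.trace ((Kᵀ * K) * M₀) := by
    rw [hEtr, hterm3, hm2, hm3, hm1, hKAK, hKKM]
    ring
  rw [hRHS]
  -- final arithmetic with the second-order condition
  have hM0link : Matrix.trace ((Kᵀ * K) * M₀)
      = Matrix.trace ((Kᵀ * K) * (Gᵀ * A * G)) - (Q / α) * Matrix.trace ((Kᵀ * K) * (Gᵀ * D)) := by
    rw [hM0, hxi, Matrix.mul_sub, Matrix.mul_smul, trace_sub, trace_smul, smul_eq_mul]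
  have hα2 : (0:ℝ) < α^2 := by positivity
  have hfinal : Q * Matrix.trace (Kᵀ * D)^2
      ≤ α^2 * (Matrix.trace (Kᵀ * (A * K)) - Matrix.trace ((Kᵀ * K) * M₀)) := by
    rw [hM0link]
    have hc : α^2 * (Q/α) = Q * α := by field_simp
    have hr : α^2 * (Matrix.trace (Kᵀ * (A * K)) - (Matrix.trace ((Kᵀ * K) * (Gᵀ * A * G))
          - Q / α * Matrix.trace ((Kᵀ * K) * (Gᵀ * D))))
        = α^2 * (-Matrix.trace ((Kᵀ * K) * (Gᵀ * A * G)) + Matrix.trace (Kᵀ * (A * K)))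
          + (α^2 * (Q/α)) * Matrix.trace ((Kᵀ * K) * (Gᵀ * D)) := by ring
    rw [hr, hc]
    linarith [hsoc]
  rw [div_div_eq_mul_div, div_le_iff₀ hα2]
  linarith [hfinal]
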